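/- Let S be a set, f : Set S → Set S monotone, and let 𝒳 = {X ⊆ S | X is well-supported for f}. Then f(⋃𝒳) = ⋃𝒳; that is, the union of all well-supported sets is a fixpoint of f. -/
import Mathlib


/-- `(X, r)` is a support ordering for `f`. -/
def IsSupportOrdering {S : Type*} (f : Set S → Set S) (X : Set S) (r : S → S → Prop) : Prop :=
  ∀ x ∈ X, x ∈ f {x' ∈ X | r x' x}

/-- `X` is well-supported for `f`: it admits a well-founded support ordering. -/
def IsWellSupported {S : Type*} (f : Set S → Set S) (X : Set S) : Prop :=
  ∃ r : S → S → Prop,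
    (∀ x y, r x y → x ∈ X ∧ y ∈ X) ∧ WellFounded r ∧ IsSupportOrdering f X r

/-- The union of all well-supported sets is well-supported. -/
theorem isWellSupported_sUnion {S : Type*} (f : Set S → Set S) (hf : Monotone f) :
    IsWellSupported f (⋃₀ {X : Set S | IsWellSupported f X}) := by
  classical
  set U := ⋃₀ {X : Set S | IsWellSupported f X} with hU
  -- rank function: smallest rank of x over all well-founded support orderings containing x
  let P : S → Set Ordinal := fun x => {o | ∃ (X : Set S) (r : S → S → Prop)
    (_ : ∀ a b, r a b → a ∈ X ∧ b ∈ X) (hwf : WellFounded r),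
    IsSupportOrdering f X r ∧ x ∈ X ∧ (hwf.apply x).rank = o}
  let ρ : S → Ordinal := fun x => sInf (P x)
  have hPne : ∀ x ∈ U, (P x).Nonempty := by
    rintro x ⟨X, ⟨r, hdom, hwf, hso⟩, hx⟩
    exact ⟨(hwf.apply x).rank, X, r, hdom, hwf, hso, hx, rfl⟩
  refine ⟨fun a b => a ∈ U ∧ b ∈ U ∧ ρ a < ρ b, fun a b h => ⟨h.1, h.2.1⟩, ?_, ?_⟩
  · exact Subrelation.wf (fun h => h.2.2) (InvImage.wf ρ Ordinal.lt_wf)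
  · intro x hx
    obtain ⟨X, r, hdom, hwf, hso, hxX, hrank⟩ := csInf_mem (hPne x hx)
    have hsub : {x' ∈ X | r x' x} ⊆ {x' ∈ U | x' ∈ U ∧ x ∈ U ∧ ρ x' < ρ x} := by
      rintro y ⟨hyX, hyr⟩
      have hyU : y ∈ U := ⟨X, ⟨r, hdom, hwf, hso⟩, hyX⟩
      have h1 : ρ y ≤ (hwf.apply y).rank :=
        csInf_le' ⟨X, r, hdom, hwf, hso, hyX, rfl⟩
      have h2 : (hwf.apply y).rank < (hwf.apply x).rank := by
        have := Acc.rank_lt_of_rel (hwf.apply x) hyr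
        simpa using this
      exact ⟨hyU, hyU, hx, lt_of_le_of_lt h1 (lt_of_lt_of_le h2 (le_of_eq hrank))⟩
    exact hf hsub (hso x hxX)

theorem union_wellSupported_fixpoint {S : Type*} (f : Set S → Set S) (hf : Monotone f) :
    f (⋃₀ {X : Set S | IsWellSupported f X}) = ⋃₀ {X : Set S | IsWellSupported f X} := by
  classical
  set U := ⋃₀ {X : Set S | IsWellSupported f X} with hU
  obtain ⟨r, hdom, hwf, hso⟩ := isWellSupported_sUnion f hf
  apply Set.Subset.antisymm
  · -- f U ⊆ U
    intro x hx
    by_cases hxU : x ∈ U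
    · exact hxU
    -- insert x U is well-supported
    have : IsWellSupported f (insert x U) := by
      refine ⟨fun a b => r a b ∨ (a ∈ U ∧ b = x), ?_, ?_, ?_⟩
      · rintro a b (h | ⟨ha, rfl⟩)
        · exact ⟨Set.mem_insert_of_mem _ (hdom a b h).1,
            Set.mem_insert_of_mem _ (hdom a b h).2⟩
        · exact ⟨Set.mem_insert_of_mem _ ha, Set.mem_insert _ _⟩
      · have hAcc1 : ∀ a, Acc r a → a ≠ x →
            Acc (fun a b => r a b ∨ (a ∈ U ∧ b = x)) a := by
          intro a hacc
          induction hacc with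
          | intro a h ih =>
            intro hax
            refine Acc.intro a ?_
            rintro b (hb | ⟨hbU, rfl⟩)
            · exact ih b hb (fun hbx => hxU (hbx ▸ (hdom b a hb).1))
            · exact absurd rfl hax
        have hAccx : Acc (fun a b => r a b ∨ (a ∈ U ∧ b = x)) x := by
          refine Acc.intro x ?_
          rintro b (hb | ⟨hbU, -⟩)
          · exact absurd (hdom b x hb).2 hxU
          · exact hAcc1 b (hwf.apply b) (fun h => hxU (h ▸ hbU))
        refine ⟨fun a => ?_⟩
        by_cases h : a = x
        · exact h ▸ hAccx
        · exact hAcc1 a (hwf.apply a) h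
      · rintro y (rfl | hyU)
        · refine hf ?_ hx
          intro u hu
          exact ⟨Set.mem_insert_of_mem _ hu, Or.inr ⟨hu, rfl⟩⟩
        · refine hf ?_ (hso y hyU)
          rintro u ⟨huU, hur⟩
          exact ⟨Set.mem_insert_of_mem _ huU, Or.inl hur⟩
    exact this.elim fun _ _ => ⟨insert x U, this, Set.mem_insert _ _⟩
  · intro x hx
    exact hf (Set.sep_subset U _) (hso x hx)
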